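/- Let {Z_n} be a controlled branching process with Z_0 = z_0 > 0 and control functions satisfying φ_n(0) = 0 almost surely. If P(ξ = 0) > 0, or P(φ(k) = 0) > 0 for every k = 1, 2, ..., then the extinction–explosion duality holds: P(Z_n → 0) + P(Z_n → ∞) = 1. -/

import Mathlib

open MeasureTheory ProbabilityTheory Filter Topology

/-- The mean of a probability distribution on `ℕ`. -/
noncomputable def natMean (ν : MeasureTheory.Measure ℕ) : ℝ := ∫ x, (x : ℝ) ∂ν

/-- A (one-type, discrete time) controlled branching process with random control functions,
offspring law `ν`, control laws `κ k` (the law of `φ(k)`), and initial population size `z0`: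
`Z (n+1) = ∑_{j < φ n (Z n)} ξ j n`, where the `ξ j n` are i.i.d. with law `ν`,
the control variables `φ n k` have law `κ k` (not depending on `n`), and the whole offspring
array is independent of the whole control array. -/
structure CBP (Ω : Type) [MeasurableSpace Ω] (μ : MeasureTheory.Measure Ω)
    (ν : MeasureTheory.Measure ℕ) (κ : ℕ → MeasureTheory.Measure ℕ) (z0 : ℕ) where
  Z : ℕ → Ω → ℕ
  ξ : ℕ → ℕ → Ω → ℕ
  φ : ℕ → ℕ → Ω → ℕ
  meas_ξ : ∀ j n, Measurable (ξ j n)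
  meas_φ : ∀ n k, Measurable (φ n k)
  law_ξ : ∀ j n, MeasureTheory.Measure.map (ξ j n) μ = ν
  law_φ : ∀ n k, MeasureTheory.Measure.map (φ n k) μ = κ k
  indep_ξ : ProbabilityTheory.iIndepFun
    (fun p : ℕ × ℕ => ξ p.1 p.2) μ
  indep_φ : ProbabilityTheory.iIndepFun
    (fun n => fun ω (k : ℕ) => φ n k ω) μ
  indep_ξφ : ProbabilityTheory.IndepFun
    (fun ω (p : ℕ × ℕ) => ξ p.1 p.2 ω) (fun ω (p : ℕ × ℕ) => φ p.1 p.2 ω) μ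
  pos_z0 : 0 < z0
  init : ∀ ω, Z 0 ω = z0
  step : ∀ n ω, Z (n + 1) ω = ∑ j ∈ Finset.range (φ n (Z n ω) ω), ξ j n ω

namespace CBPaux

lemma biInter_disjSum {α β γ : Type*} (s : Finset α) (t : Finset β) (f : α ⊕ β → Set γ) :
    ⋂ i ∈ s.disjSum t, f i = (⋂ a ∈ s, f (Sum.inl a)) ∩ ⋂ b ∈ t, f (Sum.inr b) := by
  ext x
  simp only [Set.mem_iInter, Set.mem_inter_iff, Finset.mem_disjSum]
  constructor
  · intro H
    exact ⟨fun a ha => H _ (Or.inl ⟨a, ha, rfl⟩), fun b hb => H _ (Or.inr ⟨b, hb, rfl⟩)⟩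
  · rintro ⟨H1, H2⟩ i (⟨a, ha, rfl⟩ | ⟨b, hb, rfl⟩)
    · exact H1 a ha
    · exact H2 b hb

variable {Ω : Type} [MeasurableSpace Ω] {μ : MeasureTheory.Measure Ω}
  {ν : MeasureTheory.Measure ℕ} {κ : ℕ → MeasureTheory.Measure ℕ} {z0 : ℕ}

/-- The flattened offspring array. -/
def Xarr (C : CBP Ω μ ν κ z0) : Ω → (ℕ × ℕ) → ℕ := fun ω p => C.ξ p.1 p.2 ω

/-- The flattened control array. -/
def Yarr (C : CBP Ω μ ν κ z0) : Ω → (ℕ × ℕ) → ℕ := fun ω p => C.φ p.1 p.2 ω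

/-- The σ-algebra generated by a single variable of the arrays. -/
def mIdx (C : CBP Ω μ ν κ z0) : (ℕ × ℕ) ⊕ ℕ → MeasurableSpace Ω :=
  Sum.elim (fun p => MeasurableSpace.comap (C.ξ p.1 p.2) inferInstance)
    (fun n => MeasurableSpace.comap (fun ω (k : ℕ) => C.φ n k ω) inferInstance)

lemma meas_φrow (C : CBP Ω μ ν κ z0) (n : ℕ) : Measurable (fun ω (k : ℕ) => C.φ n k ω) :=
  measurable_pi_lambda _ fun k => C.meas_φ n k

lemma mIdx_le (C : CBP Ω μ ν κ z0) : ∀ i, mIdx C i ≤ ‹MeasurableSpace Ω› := by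
  rintro (p | n)
  · exact (C.meas_ξ p.1 p.2).comap_le
  · exact (meas_φrow C n).comap_le

lemma measurableSet_comapX (C : CBP Ω μ ν κ z0) {p : ℕ × ℕ} {s : Set Ω}
    (hs : MeasurableSet[MeasurableSpace.comap (C.ξ p.1 p.2) inferInstance] s) :
    MeasurableSet[MeasurableSpace.comap (fun ω (p : ℕ × ℕ) => C.ξ p.1 p.2 ω) inferInstance] s := by
  obtain ⟨t, ht, rfl⟩ := hs
  exact ⟨(fun g : (ℕ × ℕ) → ℕ => g p) ⁻¹' t, (measurable_pi_apply p) ht, rfl⟩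

lemma measurableSet_comapY (C : CBP Ω μ ν κ z0) {n : ℕ} {s : Set Ω}
    (hs : MeasurableSet[MeasurableSpace.comap (fun ω (k : ℕ) => C.φ n k ω) inferInstance] s) :
    MeasurableSet[MeasurableSpace.comap (fun ω (p : ℕ × ℕ) => C.φ p.1 p.2 ω) inferInstance] s := by
  obtain ⟨t, ht, rfl⟩ := hs
  refine ⟨(fun g : (ℕ × ℕ) → ℕ => fun k => g (n, k)) ⁻¹' t, ?_, rfl⟩
  exact (measurable_pi_lambda _ fun k => measurable_pi_apply (n, k)) ht

/-- The combined array family is jointly independent. -/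
lemma iIndep_mIdx (C : CBP Ω μ ν κ z0) : iIndep (mIdx C) μ := by
  rw [iIndep_iff]
  intro s f hf
  have hs := s.toLeft_disjSum_toRight
  rw [← hs, biInter_disjSum, Finset.prod_disjSum]
  have hL : ∀ p ∈ s.toLeft,
      MeasurableSet[MeasurableSpace.comap (C.ξ p.1 p.2) inferInstance] (f (Sum.inl p)) := by
    intro p hp
    have := hf (Sum.inl p) (by rw [← hs] at hp ⊢; simpa using Finset.mem_toLeft.1 hp)
    exact this
  have hR : ∀ n ∈ s.toRight,
      MeasurableSet[MeasurableSpace.comap (fun ω (k : ℕ) => C.φ n k ω) inferInstance]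
        (f (Sum.inr n)) := by
    intro n hn
    have := hf (Sum.inr n) (by rw [← hs] at hn ⊢; simpa using Finset.mem_toRight.1 hn)
    exact this
  have hAX : MeasurableSet[MeasurableSpace.comap (fun ω (p : ℕ × ℕ) => C.ξ p.1 p.2 ω)
      inferInstance] (⋂ a ∈ s.toLeft, f (Sum.inl a)) :=
    MeasurableSet.biInter s.toLeft.countable_toSet fun p hp => measurableSet_comapX C (hL p hp)
  have hAY : MeasurableSet[MeasurableSpace.comap (fun ω (p : ℕ × ℕ) => C.φ p.1 p.2 ω)
      inferInstance] (⋂ b ∈ s.toRight, f (Sum.inr b)) :=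
    MeasurableSet.biInter s.toRight.countable_toSet fun n hn => measurableSet_comapY C (hR n hn)
  rw [C.indep_ξφ.meas_inter hAX hAY]
  congr 1
  · exact C.indep_ξ.iIndep.meas_biInter hL
  · exact C.indep_φ.iIndep.meas_biInter hR

/-- σ-algebra of the past strictly before time `n`. -/
def mPast (C : CBP Ω μ ν κ z0) (n : ℕ) : MeasurableSpace Ω :=
  ⨆ i ∈ {i : (ℕ × ℕ) ⊕ ℕ | Sum.elim (fun p => p.2 < n) (fun m => m < n) i}, mIdx C i

/-- σ-algebra of the fresh randomness at time `n`. -/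
def mFresh (C : CBP Ω μ ν κ z0) (n : ℕ) : MeasurableSpace Ω :=
  ⨆ i ∈ {i : (ℕ × ℕ) ⊕ ℕ | Sum.elim (fun p => p.2 = n) (fun m => m = n) i}, mIdx C i

lemma indep_past_fresh (C : CBP Ω μ ν κ z0) (n : ℕ) : Indep (mPast C n) (mFresh C n) μ := by
  refine indep_iSup_of_disjoint (mIdx_le C) (iIndep_mIdx C) ?_
  rw [Set.disjoint_left]
  rintro (p | m) h1 h2 <;> simp only [Set.mem_setOf_eq, Sum.elim_inl, Sum.elim_inr] at h1 h2 <;>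
    omega

lemma mPast_le (C : CBP Ω μ ν κ z0) (n : ℕ) : mPast C n ≤ ‹MeasurableSpace Ω› := by
  refine iSup_le fun i => iSup_le fun _ => mIdx_le C i

lemma mFresh_le (C : CBP Ω μ ν κ z0) (n : ℕ) : mFresh C n ≤ ‹MeasurableSpace Ω› := by
  refine iSup_le fun i => iSup_le fun _ => mIdx_le C i

lemma meas_ξ_past (C : CBP Ω μ ν κ z0) {j m n : ℕ} (hm : m < n) :
    Measurable[mPast C n] (C.ξ j m) := by
  rw [measurable_iff_comap_le]
  exact le_trans (le_refl _) (le_biSup (mIdx C) (show (Sum.inl (j, m) : (ℕ × ℕ) ⊕ ℕ) ∈ _ by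
    simpa using hm))

lemma meas_φ_past (C : CBP Ω μ ν κ z0) {m k n : ℕ} (hm : m < n) :
    Measurable[mPast C n] (C.φ m k) := by
  have hrow : Measurable[mPast C n] (fun ω (k : ℕ) => C.φ m k ω) := by
    rw [measurable_iff_comap_le]
    exact le_biSup (mIdx C) (show (Sum.inr m : (ℕ × ℕ) ⊕ ℕ) ∈ _ by simpa using hm)
  exact (measurable_pi_apply k).comp hrow

lemma meas_ξ_fresh (C : CBP Ω μ ν κ z0) {j n : ℕ} :
    Measurable[mFresh C n] (C.ξ j n) := by
  rw [measurable_iff_comap_le]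
  exact le_biSup (mIdx C) (show (Sum.inl (j, n) : (ℕ × ℕ) ⊕ ℕ) ∈ _ by simp)

lemma meas_φ_fresh (C : CBP Ω μ ν κ z0) {k n : ℕ} :
    Measurable[mFresh C n] (C.φ n k) := by
  have hrow : Measurable[mFresh C n] (fun ω (k : ℕ) => C.φ n k ω) := by
    rw [measurable_iff_comap_le]
    exact le_biSup (mIdx C) (show (Sum.inr n : (ℕ × ℕ) ⊕ ℕ) ∈ _ by simp)
  exact (measurable_pi_apply k).comp hrow


lemma measZ_past (C : CBP Ω μ ν κ z0) (n : ℕ) : ∀ m ≤ n, Measurable[mPast C n] (C.Z m) := by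
  intro m hm
  induction m with
  | zero =>
      have : C.Z 0 = fun _ => z0 := funext C.init
      rw [this]; exact measurable_const
  | succ m ih =>
      have hmn : m < n := hm
      have hZm := ih (Nat.le_of_lt hmn)
      refine @measurable_to_countable' ℕ Ω _ _ (mPast C n) (C.Z (m + 1)) fun c => ?_
      have : (C.Z (m + 1)) ⁻¹' {c} = ⋃ (a : ℕ), ⋃ (l : ℕ),
          (C.Z m ⁻¹' {a} ∩ C.φ m a ⁻¹' {l} ∩
            {ω | ∑ j ∈ Finset.range l, C.ξ j m ω = c}) := by
        ext ω
        simp only [Set.mem_preimage, Set.mem_singleton_iff, Set.mem_iUnion, Set.mem_inter_iff,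
          Set.mem_setOf_eq]
        constructor
        · intro hc
          exact ⟨C.Z m ω, C.φ m (C.Z m ω) ω, ⟨rfl, rfl⟩, by rw [← C.step m ω]; exact hc⟩
        · rintro ⟨a, l, ⟨ha, hl⟩, hsum⟩
          rw [C.step m ω, ha, hl]; exact hsum
      rw [this]
      refine MeasurableSet.iUnion fun a => MeasurableSet.iUnion fun l => ?_
      refine ((hZm (measurableSet_singleton a)).inter
    ((meas_φ_past C hmn) (measurableSet_singleton l))).inter ?_
      have : Measurable[mPast C n] fun ω => ∑ j ∈ Finset.range l, C.ξ j m ω :=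
        Finset.measurable_sum _ fun j _ => meas_ξ_past C hmn
      exact this (measurableSet_singleton c)

lemma measZ (C : CBP Ω μ ν κ z0) (m : ℕ) : Measurable (C.Z m) :=
  (measZ_past C m m le_rfl).mono (mPast_le C m) le_rfl

/-- The fresh increment: the population produced at time `n` from `j` progenitors. -/
def Sv (C : CBP Ω μ ν κ z0) (n j : ℕ) : Ω → ℕ :=
  fun ω => ∑ i ∈ Finset.range (C.φ n j ω), C.ξ i n ω

lemma measS_fresh (C : CBP Ω μ ν κ z0) (n j : ℕ) : Measurable[mFresh C n] (Sv C n j) := by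
  refine @measurable_to_countable' ℕ Ω _ _ (mFresh C n) (Sv C n j) fun c => ?_
  have : (Sv C n j) ⁻¹' {c} = ⋃ (l : ℕ),
      (C.φ n j ⁻¹' {l} ∩ {ω | ∑ i ∈ Finset.range l, C.ξ i n ω = c}) := by
    ext ω
    simp only [Set.mem_preimage, Set.mem_singleton_iff, Set.mem_iUnion, Set.mem_inter_iff,
      Set.mem_setOf_eq, Sv]
    constructor
    · intro hc
      exact ⟨C.φ n j ω, rfl, hc⟩
    · rintro ⟨l, hl, hsum⟩
      rw [hl]; exact hsum
  rw [this]
  refine MeasurableSet.iUnion fun l => ?_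
  refine ((meas_φ_fresh C) (measurableSet_singleton l)).inter ?_
  have : Measurable[mFresh C n] fun ω => ∑ i ∈ Finset.range l, C.ξ i n ω :=
    Finset.measurable_sum _ fun i _ => meas_ξ_fresh C
  exact this (measurableSet_singleton c)

lemma measS (C : CBP Ω μ ν κ z0) (n j : ℕ) : Measurable (Sv C n j) :=
  (measS_fresh C n j).mono (mFresh_le C n) le_rfl

/-- `r j` : a lower bound for the probability that `j` progenitors produce no offspring. -/
noncomputable def rq (ν : MeasureTheory.Measure ℕ) (κ : ℕ → MeasureTheory.Measure ℕ) (j : ℕ) :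
    ENNReal := ∑' l : ℕ, κ j {l} * (ν {0}) ^ l

lemma measure_xi_zero (C : CBP Ω μ ν κ z0) (i n : ℕ) : μ (C.ξ i n ⁻¹' {0}) = ν {0} := by
  have h := Measure.map_apply (μ := μ) (C.meas_ξ i n) (measurableSet_singleton 0)
  rw [C.law_ξ i n] at h
  exact h.symm

lemma measure_phi_eq (C : CBP Ω μ ν κ z0) (n j l : ℕ) : μ (C.φ n j ⁻¹' {l}) = κ j {l} := by
  have h := Measure.map_apply (μ := μ) (C.meas_φ n j) (measurableSet_singleton l)
  rw [C.law_φ n j] at h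
  exact h.symm

lemma q_ge (C : CBP Ω μ ν κ z0) (n j : ℕ) [IsProbabilityMeasure μ] :
    rq ν κ j ≤ μ {ω | Sv C n j ω = 0} := by
  classical
  set B : ℕ → Set Ω := fun l =>
    C.φ n j ⁻¹' {l} ∩ ⋂ i ∈ Finset.range l, C.ξ i n ⁻¹' {0} with hB
  have hmeasB : ∀ l, MeasurableSet (B l) := fun l =>
    ((C.meas_φ n j) (measurableSet_singleton l)).inter
      (MeasurableSet.biInter (Finset.range l).countable_toSet fun i _ =>
        (C.meas_ξ i n) (measurableSet_singleton 0))
  have hdisj : Pairwise (Function.onFun Disjoint B) := by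
    intro l l' hll'
    refine Set.disjoint_left.2 fun ω hω hω' => hll' ?_
    have h1 : C.φ n j ω = l := hω.1
    have h2 : C.φ n j ω = l' := hω'.1
    omega
  have hsub : (⋃ l, B l) ⊆ {ω | Sv C n j ω = 0} := by
    rintro ω ⟨_, ⟨l, rfl⟩, hω⟩
    have h1 : C.φ n j ω = l := hω.1
    have h2 : ∀ i ∈ Finset.range l, C.ξ i n ω = 0 := by
      intro i hi
      exact Set.mem_iInter₂.1 hω.2 i hi
    simp only [Set.mem_setOf_eq, Sv, h1]
    exact Finset.sum_eq_zero h2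
  have hBval : ∀ l, μ (B l) = κ j {l} * (ν {0}) ^ l := by
    intro l
    have hφmeas : MeasurableSet[MeasurableSpace.comap
        (fun ω (p : ℕ × ℕ) => C.φ p.1 p.2 ω) inferInstance] (C.φ n j ⁻¹' {l}) :=
      measurableSet_comapY C ⟨(fun g : ℕ → ℕ => g j) ⁻¹' {l},
        (measurable_pi_apply j) (measurableSet_singleton l), rfl⟩
    have hξmeas : MeasurableSet[MeasurableSpace.comap
        (fun ω (p : ℕ × ℕ) => C.ξ p.1 p.2 ω) inferInstance]
        (⋂ i ∈ Finset.range l, C.ξ i n ⁻¹' {0}) :=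
      MeasurableSet.biInter (Finset.range l).countable_toSet fun i _ =>
        measurableSet_comapX C (p := (i, n)) ⟨{0}, measurableSet_singleton 0, rfl⟩
    have := C.indep_ξφ.symm.meas_inter hφmeas hξmeas
    rw [hB]
    rw [this, measure_phi_eq C n j l]
    congr 1
    -- μ (⋂ i ∈ range l, ξ i n ⁻¹' {0}) = (ν {0})^l
    have hS : Finset.image (fun i => ((i, n) : ℕ × ℕ)) (Finset.range l) =
        Finset.map ⟨fun i => ((i, n) : ℕ × ℕ), fun a b h => by simpa using congrArg Prod.fst h⟩
          (Finset.range l) := by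
      rw [Finset.map_eq_image]; rfl
    have key := C.indep_ξ.iIndep.meas_biInter
      (S := Finset.map ⟨fun i => ((i, n) : ℕ × ℕ), fun a b h => by
        simpa using congrArg Prod.fst h⟩ (Finset.range l))
      (s := fun p => C.ξ p.1 p.2 ⁻¹' {0}) ?_
    · rw [Finset.prod_map] at key
      change _ = ∏ x ∈ Finset.range l, μ (C.ξ x n ⁻¹' {0}) at key
      have hinter : (⋂ i ∈ Finset.map ⟨fun i => ((i, n) : ℕ × ℕ), fun a b h => by
          simpa using congrArg Prod.fst h⟩ (Finset.range l), C.ξ i.1 i.2 ⁻¹' {0}) =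
          ⋂ i ∈ Finset.range l, C.ξ i n ⁻¹' {0} := by
        ext ω; simp; exact Iff.rfl
      rw [hinter] at key
      rw [key]
      rw [Finset.prod_congr rfl fun i _ => measure_xi_zero C i n, Finset.prod_const,
        Finset.card_range]
    · intro p _
      exact ⟨{0}, measurableSet_singleton 0, rfl⟩
  calc rq ν κ j = ∑' l, μ (B l) := by
        rw [rq]; exact tsum_congr fun l => (hBval l).symm
    _ = μ (⋃ l, B l) := (measure_iUnion hdisj hmeasB).symm
    _ ≤ μ {ω | Sv C n j ω = 0} := measure_mono hsub


/-- Number of visits to `[1,k]` strictly before time `n`. -/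
def cardV (C : CBP Ω μ ν κ z0) (k n : ℕ) (ω : Ω) : ℕ :=
  ((Finset.range n).filter fun m => 1 ≤ C.Z m ω ∧ C.Z m ω ≤ k).card

lemma cardV_zero (C : CBP Ω μ ν κ z0) (k : ℕ) (ω : Ω) : cardV C k 0 ω = 0 := by
  simp [cardV]

lemma cardV_succ (C : CBP Ω μ ν κ z0) (k n : ℕ) (ω : Ω) :
    cardV C k (n + 1) ω =
      cardV C k n ω + (if 1 ≤ C.Z n ω ∧ C.Z n ω ≤ k then 1 else 0) := by
  unfold cardV
  rw [Finset.range_add_one, Finset.filter_insert]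
  split
  · rw [Finset.card_insert_of_notMem (by simp)]
  · simp

lemma cardV_mono (C : CBP Ω μ ν κ z0) (k : ℕ) (ω : Ω) {n n' : ℕ} (h : n ≤ n') :
    cardV C k n ω ≤ cardV C k n' ω :=
  Finset.card_le_card (Finset.filter_subset_filter _ (Finset.range_subset_range.2 h))

/-- The event that there are at least `N` visits to `[1,k]` before some time `n` such that
every visit before `n` is followed by a nonzero population. -/
def Wset (C : CBP Ω μ ν κ z0) (k N : ℕ) : Set Ω :=
  {ω | ∃ n, N ≤ cardV C k n ω ∧
    ∀ m < n, (1 ≤ C.Z m ω ∧ C.Z m ω ≤ k) → C.Z (m + 1) ω ≠ 0}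

/-- The event that `n` is the `(N+1)`-st visit to `[1,k]`, the population at time `n` is `j`,
and every earlier visit is followed by a nonzero population. -/
def Aset (C : CBP Ω μ ν κ z0) (k N n j : ℕ) : Set Ω :=
  {ω | cardV C k n ω = N ∧ C.Z n ω = j ∧ (1 ≤ j ∧ j ≤ k) ∧
    ∀ m < n, (1 ≤ C.Z m ω ∧ C.Z m ω ≤ k) → C.Z (m + 1) ω ≠ 0}

lemma measZset_past (C : CBP Ω μ ν κ z0) {m n : ℕ} (hm : m ≤ n) (s : Set ℕ) :
    MeasurableSet[mPast C n] (C.Z m ⁻¹' s) :=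
  (measZ_past C n m hm) ((Set.to_countable s).measurableSet)

lemma meas_cardV_past (C : CBP Ω μ ν κ z0) {k n t : ℕ} (ht : t ≤ n) :
    Measurable[mPast C n] (cardV C k t) := by
  have : cardV C k t = fun ω =>
      ∑ m ∈ Finset.range t, (if 1 ≤ C.Z m ω ∧ C.Z m ω ≤ k then 1 else 0) := by
    funext ω
    unfold cardV
    exact Finset.card_filter _ _
  rw [this]
  refine Finset.measurable_sum _ fun m hm => ?_
  have hmn : m ≤ n := le_trans (le_of_lt (Finset.mem_range.1 hm)) ht
  refine Measurable.ite ?_ measurable_const measurable_const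
  have : {ω | 1 ≤ C.Z m ω ∧ C.Z m ω ≤ k} = C.Z m ⁻¹' {x | 1 ≤ x ∧ x ≤ k} := rfl
  rw [this]
  exact measZset_past C hmn _

set_option maxRecDepth 8000 in
lemma measAset_past (C : CBP Ω μ ν κ z0) (k N n j : ℕ) :
    MeasurableSet[mPast C n] (Aset C k N n j) := by
  have : Aset C k N n j = (cardV C k n) ⁻¹' {N} ∩ (C.Z n ⁻¹' {j}) ∩ {ω | 1 ≤ j ∧ j ≤ k} ∩
      ⋂ m ∈ Finset.range n,
        ((C.Z m ⁻¹' {x | 1 ≤ x ∧ x ≤ k})ᶜ ∪ (C.Z (m + 1) ⁻¹' {0})ᶜ) := by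
    ext ω
    simp only [Aset, Set.mem_setOf_eq, Set.mem_inter_iff, Set.mem_preimage,
      Set.mem_singleton_iff, Set.mem_iInter, Set.mem_union, Set.mem_compl_iff,
      Finset.mem_range]
    constructor
    · rintro ⟨h1, h2, h3, h4⟩
      refine ⟨⟨⟨h1, h2⟩, h3⟩, fun m hm => ?_⟩
      by_cases hP : 1 ≤ C.Z m ω ∧ C.Z m ω ≤ k
      · exact Or.inr (h4 m hm hP)
      · exact Or.inl hP
    · rintro ⟨⟨⟨h1, h2⟩, h3⟩, h4⟩
      refine ⟨h1, h2, h3, fun m hm hP => ?_⟩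
      rcases h4 m hm with h | h
      · exact absurd hP h
      · exact h
  rw [this]
  refine (((meas_cardV_past C le_rfl ((Set.to_countable _).measurableSet)).inter
    (measZset_past C le_rfl _)).inter (MeasurableSet.const _)).inter ?_
  refine MeasurableSet.biInter (Finset.range n).countable_toSet fun m hm => ?_
  have hmn : m < n := Finset.mem_range.1 hm
  exact ((measZset_past C hmn.le _).compl).union ((measZset_past C hmn _).compl)

lemma measAset (C : CBP Ω μ ν κ z0) (k N n j : ℕ) : MeasurableSet (Aset C k N n j) :=
  (mPast_le C n) _ (measAset_past C k N n j)

lemma Aset_subset_W (C : CBP Ω μ ν κ z0) (k N n j : ℕ) :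
    Aset C k N n j ⊆ Wset C k N := by
  rintro ω ⟨h1, _, _, h4⟩
  exact ⟨n, le_of_eq h1.symm, h4⟩

lemma Aset_disjoint (C : CBP Ω μ ν κ z0) (k N : ℕ) :
    Pairwise (Function.onFun Disjoint fun q : ℕ × ℕ => Aset C k N q.1 q.2) := by
  intro q q' hne
  refine Set.disjoint_left.2 fun ω hω hω' => hne ?_
  obtain ⟨h1, h2, h3, _⟩ := hω
  obtain ⟨h1', h2', h3', _⟩ := hω'
  have hfst : q.1 = q'.1 := by
    by_contra hne1
    rcases Nat.lt_or_ge q.1 q'.1 with hlt | hge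
    · have : cardV C k (q.1 + 1) ω ≤ cardV C k q'.1 ω := cardV_mono C k ω hlt
      rw [cardV_succ, h1, h2] at this
      simp only [h3, and_self, if_pos] at this
      omega
    · have hlt : q'.1 < q.1 := lt_of_le_of_ne hge (Ne.symm hne1)
      have : cardV C k (q'.1 + 1) ω ≤ cardV C k q.1 ω := cardV_mono C k ω hlt
      rw [cardV_succ, h1', h2'] at this
      simp only [h3', and_self, if_pos] at this
      omega
  have hsnd : q.2 = q'.2 := by rw [← h2, ← h2', hfst]
  exact Prod.ext hfst hsnd

lemma W_succ_subset (C : CBP Ω μ ν κ z0) (k N : ℕ) :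
    Wset C k (N + 1) ⊆ ⋃ q : ℕ × ℕ, (Aset C k N q.1 q.2 ∩ {ω | Sv C q.1 q.2 ω ≠ 0}) := by
  rintro ω ⟨n0, hcard, hstep⟩
  have hex : ∃ t, N + 1 ≤ cardV C k t ω := ⟨n0, hcard⟩
  classical
  have hQ : N + 1 ≤ cardV C k (Nat.find hex) ω := Nat.find_spec hex
  have hn'0 : Nat.find hex ≠ 0 := by
    intro h0
    rw [h0, cardV_zero] at hQ
    omega
  obtain ⟨n, hn⟩ : ∃ n, Nat.find hex = n + 1 :=
    ⟨Nat.find hex - 1, (Nat.succ_pred_eq_of_pos (Nat.pos_of_ne_zero hn'0)).symm⟩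
  rw [hn] at hQ
  have hnotQ : ¬ N + 1 ≤ cardV C k n ω := Nat.find_min hex (by omega)
  have hsucc := cardV_succ C k n ω
  have hP : 1 ≤ C.Z n ω ∧ C.Z n ω ≤ k := by
    by_contra hnP
    rw [if_neg hnP] at hsucc
    omega
  have hcardn : cardV C k n ω = N := by
    rw [if_pos hP] at hsucc
    omega
  have hn_lt : n + 1 ≤ n0 := hn ▸ Nat.find_min' hex hcard
  refine Set.mem_iUnion.2 ⟨(n, C.Z n ω), ⟨hcardn, rfl, hP, fun m hm hPm =>
    hstep m (lt_of_lt_of_le hm (le_of_lt hn_lt)) hPm⟩, ?_⟩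
  have hSv : Sv C n (C.Z n ω) ω = C.Z (n + 1) ω := (C.step n ω).symm
  simp only [Set.mem_setOf_eq, hSv]
  exact hstep n hn_lt hP

lemma cardV_unbounded (C : CBP Ω μ ν κ z0) (k : ℕ) (ω : Ω)
    (hfreq : ∀ N, ∃ m, N ≤ m ∧ 1 ≤ C.Z m ω ∧ C.Z m ω ≤ k) :
    ∀ N, ∃ n, N ≤ cardV C k n ω := by
  intro N
  induction N with
  | zero => exact ⟨0, Nat.zero_le _⟩
  | succ N ih =>
      obtain ⟨n, hn⟩ := ih
      obtain ⟨m, hm, hP⟩ := hfreq n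
      refine ⟨m + 1, ?_⟩
      have h1 : cardV C k n ω ≤ cardV C k m ω := cardV_mono C k ω hm
      have h2 := cardV_succ C k m ω
      rw [if_pos hP] at h2
      omega


lemma measW (C : CBP Ω μ ν κ z0) (k N : ℕ) : MeasurableSet (Wset C k N) := by
  have : Wset C k N = ⋃ n, ((cardV C k n) ⁻¹' {x | N ≤ x} ∩
      ⋂ m ∈ Finset.range n,
        ((C.Z m ⁻¹' {x | 1 ≤ x ∧ x ≤ k})ᶜ ∪ (C.Z (m + 1) ⁻¹' {0})ᶜ)) := by
    ext ω
    simp only [Wset, Set.mem_setOf_eq, Set.mem_iUnion, Set.mem_inter_iff, Set.mem_preimage,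
      Set.mem_iInter, Set.mem_union, Set.mem_compl_iff, Finset.mem_range,
      Set.mem_singleton_iff]
    constructor
    · rintro ⟨n, h1, h2⟩
      refine ⟨n, h1, fun m hm => ?_⟩
      by_cases hP : 1 ≤ C.Z m ω ∧ C.Z m ω ≤ k
      · exact Or.inr (h2 m hm hP)
      · exact Or.inl hP
    · rintro ⟨n, h1, h2⟩
      refine ⟨n, h1, fun m hm hP => ?_⟩
      rcases h2 m hm with h | h
      · exact absurd hP h
      · exact h
  rw [this]
  refine MeasurableSet.iUnion fun n => MeasurableSet.inter ?_ ?_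
  · exact (mPast_le C n) _ ((meas_cardV_past C le_rfl) ((Set.to_countable _).measurableSet))
  · refine MeasurableSet.biInter (Finset.range n).countable_toSet fun m hm => ?_
    exact (((measZ C m) ((Set.to_countable _).measurableSet)).compl).union
      (((measZ C (m + 1)) (measurableSet_singleton 0)).compl)

lemma mu_W_succ [IsProbabilityMeasure μ] (C : CBP Ω μ ν κ z0) (k N : ℕ) {ε : ENNReal}
    (hε : ∀ j, 1 ≤ j → j ≤ k → ε ≤ rq ν κ j) :
    μ (Wset C k (N + 1)) ≤ (1 - ε) * μ (Wset C k N) := by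
  have hterm : ∀ q : ℕ × ℕ,
      μ (Aset C k N q.1 q.2 ∩ {ω | Sv C q.1 q.2 ω ≠ 0}) ≤ (1 - ε) * μ (Aset C k N q.1 q.2) := by
    rintro ⟨n, j⟩
    by_cases hj : 1 ≤ j ∧ j ≤ k
    · have hmeasA := measAset_past C k N n j
      have hmeasS : MeasurableSet[mFresh C n] {ω | Sv C n j ω ≠ 0} := by
        have : {ω | Sv C n j ω ≠ 0} = ((Sv C n j) ⁻¹' {0})ᶜ := rfl
        rw [this]
        exact ((measS_fresh C n j) (measurableSet_singleton 0)).compl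
      have hind := (Indep_iff _ _ _).1 (indep_past_fresh C n) _ _ hmeasA hmeasS
      rw [hind, mul_comm]
      refine mul_le_mul' ?_ le_rfl
      have h1 : {ω | Sv C n j ω ≠ 0} = ({ω | Sv C n j ω = 0})ᶜ := rfl
      rw [h1, measure_compl (show MeasurableSet {ω | Sv C n j ω = 0} from
        (measS C n j) (measurableSet_singleton 0)) (measure_ne_top μ _), measure_univ]
      exact tsub_le_tsub_left (le_trans (hε j hj.1 hj.2) (q_ge C n j)) 1
    · have : Aset C k N n j = ∅ := by
        ext ω
        simp only [Aset, Set.mem_setOf_eq, Set.mem_empty_iff_false, iff_false]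
        rintro ⟨_, _, h3, _⟩
        exact hj h3
      simp [this]
  calc μ (Wset C k (N + 1))
      ≤ μ (⋃ q : ℕ × ℕ, (Aset C k N q.1 q.2 ∩ {ω | Sv C q.1 q.2 ω ≠ 0})) :=
        measure_mono (W_succ_subset C k N)
    _ ≤ ∑' q : ℕ × ℕ, μ (Aset C k N q.1 q.2 ∩ {ω | Sv C q.1 q.2 ω ≠ 0}) := measure_iUnion_le _
    _ ≤ ∑' q : ℕ × ℕ, (1 - ε) * μ (Aset C k N q.1 q.2) := ENNReal.tsum_le_tsum hterm
    _ = (1 - ε) * ∑' q : ℕ × ℕ, μ (Aset C k N q.1 q.2) := ENNReal.tsum_mul_left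
    _ = (1 - ε) * μ (⋃ q : ℕ × ℕ, Aset C k N q.1 q.2) := by
        rw [measure_iUnion (Aset_disjoint C k N) fun q => measAset C k N q.1 q.2]
    _ ≤ (1 - ε) * μ (Wset C k N) := by
        refine mul_le_mul' le_rfl (measure_mono ?_)
        exact Set.iUnion_subset fun q => Aset_subset_W C k N q.1 q.2

lemma mu_W_le [IsProbabilityMeasure μ] (C : CBP Ω μ ν κ z0) (k : ℕ) {ε : ENNReal}
    (hε : ∀ j, 1 ≤ j → j ≤ k → ε ≤ rq ν κ j) (N : ℕ) :
    μ (Wset C k N) ≤ (1 - ε) ^ N := by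
  induction N with
  | zero => simpa using prob_le_one
  | succ N ih =>
      calc μ (Wset C k (N + 1)) ≤ (1 - ε) * μ (Wset C k N) := mu_W_succ C k N hε
        _ ≤ (1 - ε) * (1 - ε) ^ N := mul_le_mul' le_rfl ih
        _ = (1 - ε) ^ (N + 1) := (pow_succ' _ _).symm

lemma rq_pos [IsProbabilityMeasure μ] (C : CBP Ω μ ν κ z0)
    (h : 0 < ν {0} ∨ ∀ k : ℕ, 1 ≤ k → 0 < κ k {0}) {j : ℕ} (hj : 1 ≤ j) :
    0 < rq ν κ j := by
  have hprob : IsProbabilityMeasure (κ j) := by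
    rw [← C.law_φ 0 j]
    exact Measure.isProbabilityMeasure_map (C.meas_φ 0 j).aemeasurable
  rcases h with hp | hκ
  · obtain ⟨l, hl⟩ : ∃ l : ℕ, κ j {l} ≠ 0 := by
      by_contra hall
      push_neg at hall
      have huniv : (κ j) Set.univ ≤ ∑' l : ℕ, κ j {l} := by
        rw [show (Set.univ : Set ℕ) = ⋃ l : ℕ, {l} by ext x; simp]
        exact measure_iUnion_le _
      rw [measure_univ] at huniv
      simp only [hall, tsum_zero] at huniv
      exact one_ne_zero (le_antisymm huniv zero_le) |>.elim
    have hpos : 0 < κ j {l} * (ν {0}) ^ l :=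
      ENNReal.mul_pos hl (pow_ne_zero l hp.ne')
    exact lt_of_lt_of_le hpos (ENNReal.le_tsum l)
  · have h0 := hκ j hj
    have : 0 < κ j {0} * (ν {0}) ^ 0 := by simpa using h0
    exact lt_of_lt_of_le this (ENNReal.le_tsum 0)

lemma mu_iInter_W_zero [IsProbabilityMeasure μ] (C : CBP Ω μ ν κ z0)
    (h : 0 < ν {0} ∨ ∀ k : ℕ, 1 ≤ k → 0 < κ k {0}) {k : ℕ} (hk : 1 ≤ k) :
    μ (⋂ N : ℕ, Wset C k N) = 0 := by
  classical
  have hne : (Finset.Icc 1 k).Nonempty := ⟨1, by simp [hk]⟩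
  set ε : ENNReal := (Finset.Icc 1 k).inf' hne (rq ν κ) with hε
  have hεle : ∀ j, 1 ≤ j → j ≤ k → ε ≤ rq ν κ j := fun j h1 h2 =>
    Finset.inf'_le _ (by simp [Finset.mem_Icc, h1, h2])
  have hεpos : 0 < ε := by
    rw [hε, Finset.lt_inf'_iff]
    intro j hjmem
    rw [Finset.mem_Icc] at hjmem
    exact rq_pos C h hjmem.1
  have hlt : (1 : ENNReal) - ε < 1 := ENNReal.sub_lt_self ENNReal.one_ne_top one_ne_zero hεpos.ne'
  have htend : Tendsto (fun N : ℕ => ((1 : ENNReal) - ε) ^ N) atTop (𝓝 0) :=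
    ENNReal.tendsto_pow_atTop_nhds_zero_of_lt_one hlt
  have hbound : ∀ N, μ (⋂ N : ℕ, Wset C k N) ≤ (1 - ε) ^ N := fun N =>
    le_trans (measure_mono (Set.iInter_subset _ N)) (mu_W_le C k hεle N)
  have := ge_of_tendsto htend (Filter.Eventually.of_forall hbound)
  exact le_antisymm this zero_le

end CBPaux

open CBPaux

/-- If the control functions vanish at `0` a.s. and either `P(ξ = 0) > 0` or
`P(φ(k) = 0) > 0` for every `k ≥ 1`, then the extinction–explosion duality
`P(Z_n → 0) + P(Z_n → ∞) = 1` holds. -/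
theorem cbp_extinction_explosion_duality
    {Ω : Type} [MeasurableSpace Ω] (μ : MeasureTheory.Measure Ω) [IsProbabilityMeasure μ]
    (ν : MeasureTheory.Measure ℕ) (κ : ℕ → MeasureTheory.Measure ℕ) (z0 : ℕ)
    (C : CBP Ω μ ν κ z0)
    (hφ0 : ∀ n, ∀ᵐ ω ∂μ, C.φ n 0 ω = 0)
    (h : 0 < ν {0} ∨ ∀ k : ℕ, 1 ≤ k → 0 < κ k {0}) :
    μ {ω | Tendsto (fun n => C.Z n ω) atTop (𝓝 0)}
      + μ {ω | Tendsto (fun n => C.Z n ω) atTop atTop} = 1 := by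
  classical
  set E := {ω | Tendsto (fun n => C.Z n ω) atTop (𝓝 0)} with hE
  set B := {ω | Tendsto (fun n => C.Z n ω) atTop atTop} with hB
  have h0nat : (𝓝 (0 : ℕ)) = pure 0 := by rw [nhds_discrete]
  have hEchar : ∀ ω, ω ∈ E ↔ ∃ N, ∀ n, N ≤ n → C.Z n ω = 0 := by
    intro ω
    rw [hE, Set.mem_setOf_eq, h0nat, tendsto_pure, eventually_atTop]
  have hBchar : ∀ ω, ω ∈ B ↔ ∀ K : ℕ, ∃ N, ∀ n, N ≤ n → K ≤ C.Z n ω := by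
    intro ω
    rw [hB, Set.mem_setOf_eq, tendsto_atTop_atTop]
  have hmeasE : MeasurableSet E := by
    have : E = ⋃ N : ℕ, ⋂ n : ℕ, ⋂ _ : N ≤ n, C.Z n ⁻¹' {0} := by
      ext ω
      rw [hEchar ω]
      simp only [Set.mem_iUnion, Set.mem_iInter, Set.mem_preimage, Set.mem_singleton_iff]
    rw [this]
    exact MeasurableSet.iUnion fun N => MeasurableSet.iInter fun n => MeasurableSet.iInter
      fun _ => (measZ C n) (measurableSet_singleton 0)
  have hmeasB : MeasurableSet B := by
    have : B = ⋂ K : ℕ, ⋃ N : ℕ, ⋂ n : ℕ, ⋂ _ : N ≤ n, C.Z n ⁻¹' {x | K ≤ x} := by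
      ext ω
      rw [hBchar ω]
      simp only [Set.mem_iInter, Set.mem_iUnion, Set.mem_preimage, Set.mem_setOf_eq]
    rw [this]
    exact MeasurableSet.iInter fun K => MeasurableSet.iUnion fun N => MeasurableSet.iInter
      fun n => MeasurableSet.iInter fun _ => (measZ C n) ((Set.to_countable _).measurableSet)
  have hdisj : Disjoint E B := by
    refine Set.disjoint_left.2 fun ω hωE hωB => ?_
    obtain ⟨N, hN⟩ := (hEchar ω).1 hωE
    obtain ⟨N', hN'⟩ := (hBchar ω).1 hωB 1
    have h1 := hN (max N N') (le_max_left _ _)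
    have h2 := hN' (max N N') (le_max_right _ _)
    omega
  -- the absorbing full-measure set
  set G := {ω | ∀ n, C.φ n 0 ω = 0} with hGdef
  have hGnull : μ Gᶜ = 0 := by
    have hae : ∀ᵐ ω ∂μ, ∀ n, C.φ n 0 ω = 0 := ae_all_iff.2 hφ0
    rw [ae_iff] at hae
    exact hae
  have habs : ∀ ω ∈ G, ∀ n0, C.Z n0 ω = 0 → ∀ m, n0 ≤ m → C.Z m ω = 0 := by
    intro ω hω n0 h0 m hm
    induction m, hm using Nat.le_induction with
    | base => exact h0
    | succ m hm ih =>
        rw [C.step m ω, ih, hω m]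
        simp
  -- the complement is contained (mod G) in the union of the C_k events
  have hsub : (E ∪ B)ᶜ ∩ G ⊆ ⋃ k : ℕ, ⋂ N : ℕ, Wset C (k + 1) N := by
    rintro ω ⟨hωc, hωG⟩
    rw [Set.mem_compl_iff, Set.mem_union] at hωc
    push_neg at hωc
    obtain ⟨hnE, hnB⟩ := hωc
    have hnz : ∀ m, C.Z m ω ≠ 0 := by
      intro m hm
      exact hnE ((hEchar ω).2 ⟨m, fun n hn => habs ω hωG m hm n hn⟩)
    have : ¬ ∀ K : ℕ, ∃ N, ∀ n, N ≤ n → K ≤ C.Z n ω := fun hc => hnB ((hBchar ω).2 hc)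
    push_neg at this
    obtain ⟨K, hK⟩ := this
    refine Set.mem_iUnion.2 ⟨K, Set.mem_iInter.2 fun N => ?_⟩
    have hfreq : ∀ N, ∃ m, N ≤ m ∧ 1 ≤ C.Z m ω ∧ C.Z m ω ≤ K + 1 := by
      intro N
      obtain ⟨n, hn, hlt⟩ := hK N
      exact ⟨n, hn, Nat.one_le_iff_ne_zero.2 (hnz n), by omega⟩
    obtain ⟨n, hn⟩ := cardV_unbounded C (K + 1) ω hfreq N
    exact ⟨n, hn, fun m _ _ => hnz (m + 1)⟩
  have hcompl0 : μ ((E ∪ B)ᶜ) = 0 := by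
    have hdecomp : (E ∪ B)ᶜ ⊆ ((E ∪ B)ᶜ ∩ G) ∪ Gᶜ := by
      intro ω hω
      by_cases hg : ω ∈ G
      · exact Or.inl ⟨hω, hg⟩
      · exact Or.inr hg
    have h1 : μ ((E ∪ B)ᶜ ∩ G) = 0 := by
      refine le_antisymm ?_ zero_le
      refine le_trans (measure_mono hsub) ?_
      refine le_trans (measure_iUnion_le _) ?_
      have : ∀ k : ℕ, μ (⋂ N : ℕ, Wset C (k + 1) N) = 0 := fun k =>
        mu_iInter_W_zero C h (Nat.le_add_left 1 k)
      simp [this]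
    refine le_antisymm ?_ zero_le
    calc μ ((E ∪ B)ᶜ) ≤ μ (((E ∪ B)ᶜ ∩ G) ∪ Gᶜ) := measure_mono hdecomp
      _ ≤ μ ((E ∪ B)ᶜ ∩ G) + μ Gᶜ := measure_union_le _ _
      _ = 0 := by rw [h1, hGnull, add_zero]
  have hEB1 : μ (E ∪ B) = 1 := (prob_compl_eq_zero_iff (hmeasE.union hmeasB)).1 hcompl0
  rw [← measure_union hdisj hmeasB] at *
  exact hEB1
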